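/- arXiv:1512.07020 — 2 statements merged into one kernel-verified Lean document; each statement's English description precedes it below -/
import Mathlib

section
/- Let Φ be a reduced root system and M a ℤ-module. For every n ≥ 1, the coboundary dⁿ maps symmetric cochains to symmetric cochains and antisymmetric cochains to antisymmetric cochains: if ρ̂ⁿωⁿ = ωⁿ then ρ̂ⁿ⁺¹(dⁿωⁿ) = dⁿωⁿ, and if ρ̂ⁿωⁿ = −ωⁿ then ρ̂ⁿ⁺¹(dⁿωⁿ) = −dⁿωⁿ. -/
open scoped RealInnerProductSpace

/-- A reduced root system `Φ` in a real inner product space `V`: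
a finite set of nonzero vectors spanning `V`, closed under the reflections it determines,
with integral Cartan numbers, such that the only multiples of a root in `Φ` are `±α`. -/
structure ReducedRootSystem (V : Type) [NormedAddCommGroup V] [InnerProductSpace ℝ V] :
    Type where
  roots : Set V
  finite : roots.Finite
  nonzero : ∀ α ∈ roots, α ≠ 0
  spans : Submodule.span ℝ roots = ⊤
  reflect_mem : ∀ α ∈ roots, ∀ β ∈ roots, β - (2 * ⟪β, α⟫ / ⟪α, α⟫) • α ∈ roots
  integral : ∀ α ∈ roots, ∀ β ∈ roots, ∃ n : ℤ, 2 * ⟪β, α⟫ / ⟪α, α⟫ = (n : ℝ)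
  reduced : ∀ α ∈ roots, ∀ t : ℝ, t • α ∈ roots → t = 1 ∨ t = -1

variable {V : Type} [NormedAddCommGroup V] [InnerProductSpace ℝ V]

/-- `Φ₀ = Φ ∪ {0}`. -/
def rootsZero (Φ : ReducedRootSystem V) : Set V := insert 0 Φ.roots

/-- Contraction of a tuple at position `j` (adding the `j`-th and `(j+1)`-st entries). -/
def contractAt (l : List V) (j : ℕ) : List V :=
  l.take j ++ (l.getD j 0 + l.getD (j + 1) 0) :: l.drop (j + 2)

/-- `IsRootChainAux Φ n l`: the tuple `l` of length `n` is a generator of `T_n(Φ)`: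
`T₁(Φ) = Φ₀`, and an `n`-tuple with entries in `Φ₀` lies in `T_n(Φ)` iff all its
contractions lie in `T_{n-1}(Φ)`. -/
def IsRootChainAux (Φ : ReducedRootSystem V) : ℕ → List V → Prop
  | 0, _ => False
  | 1, l => ∃ r ∈ rootsZero Φ, l = [r]
  | n + 2, l => l.length = n + 2 ∧ (∀ r ∈ l, r ∈ rootsZero Φ) ∧
      ∀ j, j + 1 < l.length → IsRootChainAux Φ (n + 1) (contractAt l j)

/-- `l` is a generator of `T_{l.length}(Φ)`. -/
def IsRootChain (Φ : ReducedRootSystem V) (l : List V) : Prop := IsRootChainAux Φ l.length l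

open Classical in
/-- Evaluation of a cochain on a chain generator: tuples containing `0` are identified with
the zero chain `0ₙ`, on which any cochain vanishes. -/
noncomputable def chainEv {M : Type} [Zero M] (ω : List V → M) (l : List V) : M :=
  if (0 : V) ∈ l then 0 else ω l

/-- The coboundary operator `dⁿ` on cochains, `dⁿωⁿ(r₀|⋯|rₙ) = ωⁿ(∂ⁿ[r₀|⋯|rₙ])`. -/
noncomputable def cobd {M : Type} [AddCommGroup M] (ω : List V → M) (l : List V) : M :=
  chainEv ω l.tail
    + (∑ j ∈ Finset.range (l.length - 1), ((-1 : ℤ) ^ (j + 1)) • chainEv ω (contractAt l j))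
    - ((-1 : ℤ) ^ (l.length - 1)) • chainEv ω l.dropLast

/-- `κₙ = C(n+1,2) + 1`. -/
def kappa (n : ℕ) : ℕ := Nat.choose (n + 1) 2 + 1

/-- The signed reversal operator `ρ̂ⁿ` on `n`-cochains: `(ρ̂ⁿω)(φ) = (-1)^{κₙ} ω(ρⁿφ)`. -/
noncomputable def rhoHat {M : Type} [AddCommGroup M] (n : ℕ) (ω : List V → M)
    (l : List V) : M :=
  ((-1 : ℤ) ^ kappa n) • ω l.reverse


section Auxiliary

omit [InnerProductSpace ℝ V] in
lemma contractAt_length (l : List V) (j : ℕ) (hj : j + 1 < l.length) :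
    (contractAt l j).length = l.length - 1 := by
  simp [contractAt]; omega

omit [InnerProductSpace ℝ V] in
lemma getD_reverse (l : List V) (i : ℕ) (h : i < l.length) :
    l.reverse.getD i 0 = l.getD (l.length - 1 - i) 0 := by
  have h1 : i < l.reverse.length := by simpa using h
  have h2 : l.length - 1 - i < l.length := by omega
  rw [List.getD_eq_getElem?_getD, List.getD_eq_getElem?_getD,
    List.getElem?_eq_getElem h1, List.getElem?_eq_getElem h2, List.getElem_reverse]

omit [InnerProductSpace ℝ V] in
lemma reverse_contractAt (l : List V) (j : ℕ) (hj : j + 1 < l.length) :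
    (contractAt l j).reverse = contractAt l.reverse (l.length - 2 - j) := by
  unfold contractAt
  rw [List.reverse_append, List.reverse_cons, List.append_assoc, List.singleton_append]
  have e1 : (List.drop (j+2) l).reverse = l.reverse.take (l.length - 2 - j) := by
    rw [List.reverse_drop]; congr 1; omega
  have e2 : (List.take j l).reverse = l.reverse.drop (l.length - 2 - j + 2) := by
    rw [List.reverse_take]; congr 1; omega
  have e3 : l.reverse.getD (l.length - 2 - j) 0 = l.getD (j+1) 0 := by
    rw [getD_reverse l _ (by omega)]; congr 1; omega
  have e4 : l.reverse.getD (l.length - 2 - j + 1) 0 = l.getD j 0 := by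
    rw [getD_reverse l _ (by omega)]; congr 1; omega
  rw [e1, e2, e3, e4, add_comm]

omit [InnerProductSpace ℝ V] in
lemma tail_contractAt (a : V) (t : List V) (j : ℕ) :
    (contractAt (a :: t) (j+1)).tail = contractAt t j := by
  simp [contractAt]

omit [InnerProductSpace ℝ V] in
lemma getD_dropLast (l : List V) (j : ℕ) (h : j < l.length - 1) :
    l.dropLast.getD j 0 = l.getD j 0 := by
  rw [List.dropLast_eq_take, List.getD_eq_getElem?_getD, List.getD_eq_getElem?_getD,
    List.getElem?_take_of_lt (by omega)]

omit [InnerProductSpace ℝ V] in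
lemma dropLast_contractAt (l : List V) (j : ℕ) (hj : j + 2 < l.length) :
    (contractAt l j).dropLast = contractAt l.dropLast j := by
  unfold contractAt
  rw [List.dropLast_append_cons, List.dropLast_cons_of_ne_nil
    (by rw [Ne, List.drop_eq_nil_iff]; omega)]
  have e1 : l.dropLast.take j = l.take j := by
    rw [List.dropLast_eq_take, List.take_take]; congr 1; omega
  have e2 : l.dropLast.drop (j + 2) = (l.drop (j+2)).dropLast := by
    rw [List.dropLast_eq_take, List.dropLast_eq_take, List.drop_take]
    congr 1; simp; omega
  rw [e1, e2, getD_dropLast l j (by omega), getD_dropLast l (j+1) (by omega)]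

lemma isRootChain_of_aux {Φ : ReducedRootSystem V} {k : ℕ} {l : List V}
    (h : IsRootChainAux Φ k l) : l.length = k ∧ IsRootChain Φ l := by
  match k with
  | 0 => exact absurd h (by simp [IsRootChainAux])
  | 1 =>
    obtain ⟨r, hr, rfl⟩ : ∃ r ∈ rootsZero Φ, l = [r] := h
    exact ⟨rfl, ⟨r, hr, rfl⟩⟩
  | n + 2 =>
    have h' : l.length = n + 2 ∧ _ := h
    exact ⟨h'.1, by rw [IsRootChain, h'.1]; exact h⟩

lemma chain_contractAt {Φ : ReducedRootSystem V} {l : List V}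
    (h : IsRootChain Φ l) (j : ℕ) (hj : j + 1 < l.length) :
    IsRootChain Φ (contractAt l j) := by
  rw [IsRootChain] at h
  match hl : l.length, h with
  | 1, _ => omega
  | n + 2, h => exact (isRootChain_of_aux (h.2.2 j hj)).2

lemma chain_mem {Φ : ReducedRootSystem V} {l : List V} (h : IsRootChain Φ l) :
    ∀ r ∈ l, r ∈ rootsZero Φ := by
  rw [IsRootChain] at h
  match hk : l.length with
  | 0 => simp_all [IsRootChainAux]
  | 1 =>
    rw [hk] at h
    obtain ⟨r, hr, rfl⟩ : ∃ r ∈ rootsZero Φ, l = [r] := h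
    intro s hs
    simp only [List.mem_singleton] at hs
    exact hs ▸ hr
  | n + 2 =>
    rw [hk] at h
    exact h.2.1

lemma chain_tail {Φ : ReducedRootSystem V} : ∀ (n : ℕ) (l : List V), l.length = n + 2 →
    IsRootChain Φ l → IsRootChain Φ l.tail := by
  intro n
  induction n with
  | zero =>
    rintro (_ | ⟨a, _ | ⟨b, _ | t⟩⟩) hl h <;> simp at hl
    exact ⟨b, chain_mem h b (by simp), rfl⟩
  | succ n ih =>
    intro l hl h
    have h0 := h
    rw [IsRootChain, hl] at h
    obtain ⟨a, t, rfl⟩ : ∃ a t, l = a :: t := by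
      cases l with | nil => simp at hl | cons a t => exact ⟨a, t, rfl⟩
    have ht : t.length = n + 2 := by simpa using hl
    rw [List.tail_cons, IsRootChain, ht]
    refine ⟨ht, fun r hr => chain_mem h0 r (by simp [hr]), fun j hj => ?_⟩
    rw [← tail_contractAt]
    have hc : IsRootChain Φ (contractAt (a :: t) (j + 1)) :=
      (isRootChain_of_aux (h.2.2 (j+1) (by simp; omega))).2
    have hcl : (contractAt (a :: t) (j+1)).length = n + 2 := by
      rw [contractAt_length _ _ (by simp; omega)]; simp; omega
    have := ih _ hcl hc
    rw [IsRootChain] at this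
    rwa [show (contractAt (a :: t) (j+1)).tail.length = n + 1 by
      simp [hcl]] at this

lemma chain_dropLast {Φ : ReducedRootSystem V} : ∀ (n : ℕ) (l : List V), l.length = n + 2 →
    IsRootChain Φ l → IsRootChain Φ l.dropLast := by
  intro n
  induction n with
  | zero =>
    rintro (_ | ⟨a, _ | ⟨b, _ | t⟩⟩) hl h <;> simp at hl
    exact ⟨a, chain_mem h a (by simp), rfl⟩
  | succ n ih =>
    intro l hl h
    have h0 := h
    rw [IsRootChain, hl] at h
    have hdl : l.dropLast.length = n + 2 := by simp [hl]
    rw [IsRootChain, hdl]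
    refine ⟨hdl, fun r hr => chain_mem h0 r (List.dropLast_sublist l |>.mem hr), fun j hj => ?_⟩
    rw [← dropLast_contractAt l j (by omega)]
    have hc : IsRootChain Φ (contractAt l j) :=
      (isRootChain_of_aux (h.2.2 j (by omega))).2
    have hcl : (contractAt l j).length = n + 2 := by
      rw [contractAt_length _ _ (by omega)]; omega
    have := ih _ hcl hc
    rw [IsRootChain] at this
    rwa [show (contractAt l j).dropLast.length = n + 1 by simp [hcl]] at this

lemma neg_one_pow_congr' (a b : ℕ) (h : a % 2 = b % 2) : (-1 : ℤ)^a = (-1 : ℤ)^b := by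
  rw [show a = 2*(a/2) + a%2 by omega, show b = 2*(b/2) + b%2 by omega,
    pow_add, pow_add, pow_mul, pow_mul, h]
  norm_num

lemma sign_helper2 (a b d : ℕ) (e : ℤ) (h : (a + b) % 2 = d % 2) :
    (-1 : ℤ)^a * ((-1 : ℤ)^b * e) = (-1 : ℤ)^d * e := by
  rw [← mul_assoc, ← pow_add, neg_one_pow_congr' _ _ h]

lemma sign_helper3 (a b c d : ℕ) (e : ℤ) (h : (a + b + c) % 2 = d % 2) :
    (-1 : ℤ)^a * ((-1 : ℤ)^b * ((-1 : ℤ)^c * e)) = (-1 : ℤ)^d * e := by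
  rw [← mul_assoc, ← mul_assoc, ← pow_add, ← pow_add, neg_one_pow_congr' _ _ h]

lemma kappa_succ (n : ℕ) : kappa (n + 1) = kappa n + (n + 1) := by
  unfold kappa
  have h := Nat.choose_succ_succ (n+1) 1
  simp only [Nat.choose_one_right, Nat.succ_eq_add_one] at h
  norm_num at h
  omega

omit [InnerProductSpace ℝ V] in
lemma chainEv_rhoHat {M : Type} [AddCommGroup M] (n : ℕ) (ω : List V → M) (l : List V) :
    chainEv (rhoHat n ω) l = ((-1 : ℤ)^kappa n) • chainEv ω l.reverse := by
  by_cases h : (0 : V) ∈ l <;> simp [chainEv, rhoHat, h, List.mem_reverse]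

lemma main_aux {M : Type} [AddCommGroup M] (Φ : ReducedRootSystem V) (n : ℕ) (hn : 1 ≤ n)
    (ω : List V → M) (e : ℤ)
    (hyp : ∀ m : List V, m.length = n → IsRootChain Φ m →
      chainEv (rhoHat n ω) m = e • chainEv ω m)
    (l : List V) (hlen : l.length = n + 1) (hchain : IsRootChain Φ l) :
    chainEv (rhoHat (n + 1) (cobd ω)) l = e • chainEv (cobd ω) l := by
  set c : ℤ := (-1 : ℤ)^kappa n * e with hc
  have hrev : ∀ m : List V, m.length = n → IsRootChain Φ m →
      chainEv ω m.reverse = c • chainEv ω m := by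
    intro m h1 h2
    have h3 := hyp m h1 h2
    rw [chainEv_rhoHat] at h3
    calc chainEv ω m.reverse
        = ((-1 : ℤ)^kappa n) • (((-1 : ℤ)^kappa n) • chainEv ω m.reverse) := by
          rw [smul_smul, ← pow_add, Even.neg_one_pow ⟨kappa n, by omega⟩, one_smul]
      _ = ((-1 : ℤ)^kappa n) • (e • chainEv ω m) := by rw [h3]
      _ = c • chainEv ω m := by rw [smul_smul, hc]
  rw [chainEv_rhoHat]
  by_cases h0 : (0 : V) ∈ l
  · have h0' : (0 : V) ∈ l.reverse := List.mem_reverse.mpr h0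
    simp [chainEv, h0, h0']
  · have h0' : ¬ (0 : V) ∈ l.reverse := fun h => h0 (List.mem_reverse.mp h)
    rw [show chainEv (cobd ω) l.reverse = cobd ω l.reverse from if_neg h0',
      show chainEv (cobd ω) l = cobd ω l from if_neg h0]
    -- chains of length n
    have hdc : IsRootChain Φ l.dropLast := chain_dropLast (n-1) l (by omega) hchain
    have htc : IsRootChain Φ l.tail := chain_tail (n-1) l (by omega) hchain
    have hdl : l.dropLast.length = n := by simp [hlen]
    have htl : l.tail.length = n := by simp [hlen]
    have hA : chainEv ω l.reverse.tail = c • chainEv ω l.dropLast := by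
      rw [List.tail_reverse]; exact hrev _ hdl hdc
    have hB : chainEv ω l.reverse.dropLast = c • chainEv ω l.tail := by
      have h1 : l.tail = l.reverse.dropLast.reverse := by
        rw [← List.tail_reverse (l := l.reverse), List.reverse_reverse]
      have : l.reverse.dropLast = l.tail.reverse := by
        rw [h1, List.reverse_reverse]
      rw [this]; exact hrev _ htl htc
    have hX : ∀ j, j < n → chainEv ω (contractAt l.reverse j)
        = c • chainEv ω (contractAt l (n - 1 - j)) := by
      intro j hj
      have h1 : (contractAt l (n-1-j)).reverse = contractAt l.reverse j := by
        rw [reverse_contractAt l (n-1-j) (by omega)]; congr 1; omega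
      rw [← h1]
      exact hrev _ (by rw [contractAt_length l _ (by omega)]; omega)
        (chain_contractAt hchain _ (by omega))
    have hlr : l.reverse.length = n + 1 := by simpa using hlen
    have key : cobd ω l.reverse =
        c • chainEv ω l.dropLast
          + ∑ j ∈ Finset.range n,
              ((-1 : ℤ)^(n - j)) • (c • chainEv ω (contractAt l j))
          - ((-1 : ℤ)^n) • (c • chainEv ω l.tail) := by
      unfold cobd
      rw [hlr]
      simp only [Nat.add_sub_cancel]
      rw [hA, hB]
      congr 2
      rw [← Finset.sum_range_reflect
        (fun j => ((-1 : ℤ)^(n - j)) • (c • chainEv ω (contractAt l j))) n]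
      refine Finset.sum_congr rfl fun j hj => ?_
      rw [Finset.mem_range] at hj
      rw [hX j hj, show n - (n - 1 - j) = j + 1 by omega]
    rw [key]
    unfold cobd
    rw [hlen]
    simp only [Nat.add_sub_cancel]
    rw [smul_sub, smul_add, Finset.smul_sum, smul_sub, smul_add, Finset.smul_sum]
    simp only [smul_smul, mul_assoc]
    have hkk := kappa_succ n
    have c1 : (-1 : ℤ)^kappa (n+1) * c = -(e * (-1 : ℤ)^n) := by
      rw [hc, sign_helper2 (kappa (n+1)) (kappa n) (n+1) e (by omega), pow_succ]; ring
    have c2 : (-1 : ℤ)^kappa (n+1) * ((-1 : ℤ)^n * c) = -e := by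
      rw [hc, sign_helper3 (kappa (n+1)) n (kappa n) 1 e (by omega), pow_one]; ring
    have hsum : ∑ j ∈ Finset.range n,
          ((-1 : ℤ)^kappa (n+1) * ((-1 : ℤ)^(n - j) * c)) • chainEv ω (contractAt l j)
        = ∑ j ∈ Finset.range n,
          (e * (-1 : ℤ)^(j+1)) • chainEv ω (contractAt l j) := by
      refine Finset.sum_congr rfl fun j hj => ?_
      rw [Finset.mem_range] at hj
      rw [hc, sign_helper3 (kappa (n+1)) (n - j) (kappa n) (j+1) e (by omega), mul_comm]
    rw [hsum, c1, c2, neg_smul, neg_smul]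
    abel

end Auxiliary

/-- For every `n ≥ 1` the coboundary `dⁿ` maps symmetric cochains to
symmetric cochains and antisymmetric cochains to antisymmetric cochains.  (Equalities of
cochains are equalities of the induced forms on `C_n(Φ)`, i.e. on all chains.) -/
theorem coboundary_preserves_reversal_symmetry
    {V : Type} [NormedAddCommGroup V] [InnerProductSpace ℝ V] [FiniteDimensional ℝ V]
    (Φ : ReducedRootSystem V) (M : Type) [AddCommGroup M] (n : ℕ) (hn : 1 ≤ n)
    (ω : List V → M) :
    ((∀ l : List V, l.length = n → IsRootChain Φ l →
          chainEv (rhoHat n ω) l = chainEv ω l) →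
        ∀ l : List V, l.length = n + 1 → IsRootChain Φ l →
          chainEv (rhoHat (n + 1) (cobd ω)) l = chainEv (cobd ω) l) ∧
    ((∀ l : List V, l.length = n → IsRootChain Φ l →
          chainEv (rhoHat n ω) l = - chainEv ω l) →
        ∀ l : List V, l.length = n + 1 → IsRootChain Φ l →
          chainEv (rhoHat (n + 1) (cobd ω)) l = - chainEv (cobd ω) l) := by
  constructor
  · intro hyp l hl hc
    have := main_aux Φ n hn ω 1 (fun m h1 h2 => by rw [hyp m h1 h2, one_smul]) l hl hc
    rwa [one_smul] at this
  · intro hyp l hl hc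
    have := main_aux Φ n hn ω (-1)
      (fun m h1 h2 => by rw [hyp m h1 h2, neg_smul, one_smul]) l hl hc
    rwa [neg_smul, one_smul] at this
end

section
/- Let Φ be a reduced root system with positive roots Φ⁺ and simple roots Δ. If β, β′ ∈ Φ are roots whose sum β + β′ is a positive root that is not simple, then there exists a simple root α ∈ Δ such that β + β′ − α is a root, and moreover at least one of β − α and β′ − α is a root or zero. -/
open scoped RealInnerProductSpace

variable {V : Type} [NormedAddCommGroup V] [InnerProductSpace ℝ V]

/-- The positive roots with respect to a linear functional `f` (nonvanishing on `Φ`). -/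
def posRoots (Φ : ReducedRootSystem V) (f : V →ₗ[ℝ] ℝ) : Set V :=
  {α | α ∈ Φ.roots ∧ 0 < f α}

/-- The simple roots: positive roots that are not the sum of two positive roots. -/
def simpleRoots (Φ : ReducedRootSystem V) (f : V →ₗ[ℝ] ℝ) : Set V :=
  {α | α ∈ posRoots Φ f ∧ ¬ ∃ β ∈ posRoots Φ f, ∃ γ ∈ posRoots Φ f, α = β + γ}

/-- Positivity of the inner square of a nonzero vector. -/
lemma rrs_inner_self_pos {x : V} (hx : x ≠ 0) : (0:ℝ) < ⟪x, x⟫ :=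
  lt_of_le_of_ne real_inner_self_nonneg (fun h => hx (inner_self_eq_zero.mp h.symm))

/-- Roots are closed under negation. -/
lemma rrs_neg_mem (Φ : ReducedRootSystem V) {α : V} (hα : α ∈ Φ.roots) : -α ∈ Φ.roots := by
  have h := Φ.reflect_mem α hα α hα
  have hαα : (⟪α, α⟫ : ℝ) ≠ 0 := (rrs_inner_self_pos (Φ.nonzero α hα)).ne'
  have hc : (2 * ⟪α, α⟫ / ⟪α, α⟫ : ℝ) = 2 := by field_simp
  rw [hc] at h
  have h2 : α - (2:ℝ) • α = -α := by
    rw [two_smul]; abel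
  rwa [h2] at h

/-- If the inner product of two roots is positive, their difference is a root or zero. -/
lemma rrs_sub_mem (Φ : ReducedRootSystem V) {α β : V} (hα : α ∈ Φ.roots) (hβ : β ∈ Φ.roots)
    (h : 0 < ⟪β, α⟫) : β = α ∨ β - α ∈ Φ.roots := by
  obtain ⟨n, hn⟩ := Φ.integral α hα β hβ
  obtain ⟨m, hm⟩ := Φ.integral β hβ α hα
  have hαα : (0:ℝ) < ⟪α, α⟫ := rrs_inner_self_pos (Φ.nonzero α hα)
  have hββ : (0:ℝ) < ⟪β, β⟫ := rrs_inner_self_pos (Φ.nonzero β hβ)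
  have hba : ⟪α, β⟫ = ⟪β, α⟫ := real_inner_comm β α
  have hn0 : (0:ℝ) < n := by rw [← hn]; positivity
  have hm0 : (0:ℝ) < m := by rw [← hm, hba]; positivity
  have hn1 : 1 ≤ n := by exact_mod_cast hn0
  have hm1 : 1 ≤ m := by exact_mod_cast hm0
  have hneq : 2 * ⟪β, α⟫ = (n : ℝ) * ⟪α, α⟫ := by
    field_simp at hn; linarith [hn]
  have hmeq : 2 * ⟪β, α⟫ = (m : ℝ) * ⟪β, β⟫ := by
    rw [← hba]; field_simp at hm; linarith [hm]
  rcases eq_or_lt_of_le hn1 with he | hn2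
  · right
    have h1 := Φ.reflect_mem α hα β hβ
    have hc : (2 * ⟪β, α⟫ / ⟪α, α⟫ : ℝ) = 1 := by rw [hn, ← he]; norm_num
    rw [hc, one_smul] at h1
    exact h1
  rcases eq_or_lt_of_le hm1 with he | hm2
  · right
    have h1 := Φ.reflect_mem β hβ α hα
    have hc : (2 * ⟪α, β⟫ / ⟪β, β⟫ : ℝ) = 1 := by rw [hm, ← he]; norm_num
    rw [hc, one_smul] at h1
    have h2 := rrs_neg_mem Φ h1
    rwa [neg_sub] at h2
  · left
    have hn2' : (2:ℝ) ≤ n := by exact_mod_cast hn2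
    have hm2' : (2:ℝ) ≤ m := by exact_mod_cast hm2
    have h1 : ⟪α, α⟫ ≤ ⟪β, α⟫ := by nlinarith
    have h2 : ⟪β, β⟫ ≤ ⟪β, α⟫ := by nlinarith
    have h3 : ⟪β - α, β - α⟫ ≤ 0 := by
      rw [real_inner_sub_sub_self]; linarith
    have h4 : ⟪β - α, β - α⟫ = 0 := le_antisymm h3 real_inner_self_nonneg
    have h5 : β - α = 0 := by
      rwa [real_inner_self_eq_norm_sq, pow_eq_zero_iff (by norm_num), norm_eq_zero] at h4
    exact sub_eq_zero.mp h5

/-- Every positive root lies in the additive monoid generated by the simple roots. -/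
lemma rrs_mem_closure (Φ : ReducedRootSystem V) (f : V →ₗ[ℝ] ℝ) :
    ∀ γ ∈ posRoots Φ f, γ ∈ AddSubmonoid.closure (simpleRoots Φ f) := by
  have hfin : (posRoots Φ f).Finite := Φ.finite.subset fun x hx => hx.1
  suffices H : ∀ N : ℕ, ∀ γ ∈ posRoots Φ f,
      ({x ∈ posRoots Φ f | f x < f γ}).ncard ≤ N →
      γ ∈ AddSubmonoid.closure (simpleRoots Φ f) by
    intro γ hγ
    exact H _ γ hγ le_rfl
  intro N
  induction N with
  | zero =>
    intro γ hγ hcard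
    by_cases hs : γ ∈ simpleRoots Φ f
    · exact AddSubmonoid.subset_closure hs
    · exfalso
      have hdec : ∃ δ ∈ posRoots Φ f, ∃ ε ∈ posRoots Φ f, γ = δ + ε := by
        by_contra h; exact hs ⟨hγ, h⟩
      obtain ⟨δ, hδ, ε, hε, hγeq⟩ := hdec
      have hδmem : δ ∈ {x ∈ posRoots Φ f | f x < f γ} := by
        refine ⟨hδ, ?_⟩
        have : f γ = f δ + f ε := by rw [hγeq]; simp
        linarith [hε.2]
      have : ({x ∈ posRoots Φ f | f x < f γ}).ncard = 0 := le_antisymm hcard (Nat.zero_le _)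
      have hemp := (Set.ncard_eq_zero (hfin.subset fun x hx => hx.1)).mp this
      rw [hemp] at hδmem
      exact hδmem
  | succ N ih =>
    intro γ hγ hcard
    by_cases hs : γ ∈ simpleRoots Φ f
    · exact AddSubmonoid.subset_closure hs
    · have hdec : ∃ δ ∈ posRoots Φ f, ∃ ε ∈ posRoots Φ f, γ = δ + ε := by
        by_contra h; exact hs ⟨hγ, h⟩
      obtain ⟨δ, hδ, ε, hε, hγeq⟩ := hdec
      have hfγ : f γ = f δ + f ε := by rw [hγeq]; simp
      have hδlt : f δ < f γ := by linarith [hε.2]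
      have hεlt : f ε < f γ := by linarith [hδ.2]
      have key : ∀ x ∈ posRoots Φ f, f x < f γ →
          ({y ∈ posRoots Φ f | f y < f x}).ncard ≤ N := by
        intro x hx hxlt
        have hsub : {y ∈ posRoots Φ f | f y < f x} ⊂ {y ∈ posRoots Φ f | f y < f γ} := by
          constructor
          · intro y hy; exact ⟨hy.1, lt_trans hy.2 hxlt⟩
          · intro hle
            have : x ∈ {y ∈ posRoots Φ f | f y < f x} := hle ⟨hx, hxlt⟩
            exact lt_irrefl (f x) this.2
        have := Set.ncard_lt_ncard hsub (hfin.subset fun y hy => hy.1)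
        omega
      have hδc := ih δ hδ (key δ hδ hδlt)
      have hεc := ih ε hε (key ε hε hεlt)
      rw [hγeq]
      exact AddSubmonoid.add_mem _ hδc hεc

/-- For a positive non-simple root `γ`, some simple root has positive inner product with `γ`. -/
lemma rrs_exists_simple_pos_inner (Φ : ReducedRootSystem V) (f : V →ₗ[ℝ] ℝ)
    {γ : V} (hγ : γ ∈ posRoots Φ f) :
    ∃ α ∈ simpleRoots Φ f, 0 < ⟪γ, α⟫ := by
  obtain ⟨l, hl, hsum⟩ := AddSubmonoid.exists_list_of_mem_closure (rrs_mem_closure Φ f γ hγ)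
  have hγγ : (0:ℝ) < ⟪γ, γ⟫ := rrs_inner_self_pos (Φ.nonzero γ hγ.1)
  by_contra h
  push_neg at h
  have hsum_le : ∀ l' : List V, (∀ y ∈ l', y ∈ simpleRoots Φ f) → ⟪γ, l'.sum⟫ ≤ 0 := by
    intro l'
    induction l' with
    | nil => intro _; simp
    | cons a t iht =>
      intro hmem
      rw [List.sum_cons, inner_add_right]
      have h1 := h a (hmem a List.mem_cons_self)
      have h2 := iht fun y hy => hmem y (List.mem_cons_of_mem a hy)
      linarith
  have := hsum_le l hl
  rw [hsum] at this
  linarith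

/-- If two roots `β, β'` add up to a positive root that is not simple,
then there is a simple root `α` such that `β + β' - α` is a root and at least one of
`β - α`, `β' - α` is a root or zero. -/
theorem subtract_simple_root_from_sum_and_summand
    {V : Type} [NormedAddCommGroup V] [InnerProductSpace ℝ V] [FiniteDimensional ℝ V]
    (Φ : ReducedRootSystem V) (f : V →ₗ[ℝ] ℝ) (hf : ∀ α ∈ Φ.roots, f α ≠ 0)
    (β β' : V) (hβ : β ∈ Φ.roots) (hβ' : β' ∈ Φ.roots)
    (hsum : β + β' ∈ posRoots Φ f) (hns : β + β' ∉ simpleRoots Φ f) :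
    ∃ α ∈ simpleRoots Φ f, β + β' - α ∈ Φ.roots ∧
      (β - α ∈ rootsZero Φ ∨ β' - α ∈ rootsZero Φ) := by
  obtain ⟨α, hαs, hpos⟩ := rrs_exists_simple_pos_inner Φ f hsum
  have hαr : α ∈ Φ.roots := hαs.1.1
  refine ⟨α, hαs, ?_, ?_⟩
  · rcases rrs_sub_mem Φ hαr hsum.1 hpos with he | hr
    · exact absurd (he ▸ hαs) hns
    · exact hr
  · have hadd : ⟪β, α⟫ + ⟪β', α⟫ > 0 := by
      rw [← inner_add_left]; exact hpos
    rcases lt_or_ge 0 ⟪β, α⟫ with hb | hb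
    · left
      rcases rrs_sub_mem Φ hαr hβ hb with he | hr
      · rw [he, sub_self]; exact Set.mem_insert 0 _
      · exact Set.mem_insert_of_mem 0 hr
    · right
      have hb' : 0 < ⟪β', α⟫ := by linarith
      rcases rrs_sub_mem Φ hαr hβ' hb' with he | hr
      · rw [he, sub_self]; exact Set.mem_insert 0 _
      · exact Set.mem_insert_of_mem 0 hr
end
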